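/- Let G be an adjusted permutation digraph with at least two vertices; that is, for each v ∈ V(G) there are reals α_v, β_v, γ_v such that, with S_v the closed line segment in ℝ² from (α_v, 0) to (β_v, 1) and T_v the closed line segment from (α_v, 0) to (γ_v, 1), one has (v, w) ∈ E(G) ⇔ S_v ∩ T_w ≠ ∅. Then lbimimw(G) ≤ 4. -/

import Mathlib

open scoped Classical

/-- An induced matching in a digraph with edge relation `D`: a finite set of edges of `D`,
no two of which share an endpoint, such that no edge of `D` joins an endpoint of one
matching edge to an endpoint of a different matching edge. -/
def IsIndMatching {V : Type} (D : V → V → Prop) (M : Finset (V × V)) : Prop :=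
  (∀ e ∈ M, D e.1 e.2) ∧
    ∀ e ∈ M, ∀ f ∈ M, e ≠ f →
      ∀ x, (x = e.1 ∨ x = e.2) → ∀ y, (y = f.1 ∨ y = f.2) → x ≠ y ∧ ¬D x y

/-- `ν(D)`: the maximum size of an induced matching in the digraph `D`. -/
noncomputable def nu {V : Type} (D : V → V → Prop) : ℕ :=
  sSup {n | ∃ M : Finset (V × V), IsIndMatching D M ∧ M.card = n}

/-- The bipartite digraph `G[A→B]`, whose edges are the edges of `E` from `A` to `B`. -/
def cutRel {V : Type} (E : V → V → Prop) (A B : Set V) : V → V → Prop :=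
  fun x y => x ∈ A ∧ y ∈ B ∧ E x y

/-- `bimim_G(A) = ν(G[A→Ā]) + ν(G[Ā→A])`. -/
noncomputable def bimimCut {V : Type} (E : V → V → Prop) (A : Set V) : ℕ :=
  nu (cutRel E A Aᶜ) + nu (cutRel E Aᶜ A)

/-- For an undirected graph `G`, `mim_G(A) = ν(G[A, Ā])`. -/
noncomputable def mimCut {V : Type} (G : SimpleGraph V) (A : Set V) : ℕ :=
  nu (cutRel G.Adj A Aᶜ)
/-- A caterpillar: a tree containing a path such that every vertex outside the path
has a neighbor on the path. -/
def IsCaterpillar {L : Type} (T : SimpleGraph L) : Prop :=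
  ∃ (u v : L) (p : T.Walk u v), p.IsPath ∧
    ∀ w : L, w ∉ p.support → ∃ x ∈ p.support, T.Adj w x

/-- A branch decomposition of a (di)graph on vertex set `V`: a subcubic tree (at least
two vertices, every internal vertex of degree 3) together with a bijection from `V`
to the set of leaves of the tree. -/
structure BranchDecomp (V : Type) where
  L : Type
  finL : Finite L
  T : SimpleGraph L
  isTree : T.IsTree
  two_le : 2 ≤ Nat.card L
  subcubic : ∀ t : L, (T.neighborSet t).ncard = 1 ∨ (T.neighborSet t).ncard = 3
  toLeaf : V → L
  inj : Function.Injective toLeaf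
  mem_leaf : ∀ v : V, (T.neighborSet (toLeaf v)).ncard = 1
  surj : ∀ t : L, (T.neighborSet t).ncard = 1 → ∃ v, toLeaf v = t

/-- The side `A_e` of the cut induced by the tree edge `{t₁, t₂}`: the set of vertices
mapped to leaves in the component of `T - e` containing `t₁`. -/
def BranchDecomp.side {V : Type} (bd : BranchDecomp V) (t₁ t₂ : bd.L) : Set V :=
  {v | (bd.T.deleteEdges {s(t₁, t₂)}).Reachable t₁ (bd.toLeaf v)}

/-- The bi-mim-width of a branch decomposition with respect to a digraph. -/
noncomputable def BranchDecomp.width {V : Type} (bd : BranchDecomp V)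
    (E : V → V → Prop) : ℕ :=
  sSup {n | ∃ t₁ t₂, bd.T.Adj t₁ t₂ ∧ n = bimimCut E (bd.side t₁ t₂)}

/-- The mim-width of a branch decomposition with respect to an undirected graph. -/
noncomputable def BranchDecomp.uwidth {V : Type} (bd : BranchDecomp V)
    (G : SimpleGraph V) : ℕ :=
  sSup {n | ∃ t₁ t₂, bd.T.Adj t₁ t₂ ∧ n = mimCut G (bd.side t₁ t₂)}

/-- The bi-mim-width of a digraph. -/
noncomputable def bimimw {V : Type} (E : V → V → Prop) : ℕ :=
  sInf {n | ∃ bd : BranchDecomp V, bd.width E = n}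

/-- The linear bi-mim-width of a digraph. -/
noncomputable def lbimimw {V : Type} (E : V → V → Prop) : ℕ :=
  sInf {n | ∃ bd : BranchDecomp V, IsCaterpillar bd.T ∧ bd.width E = n}

/-- The mim-width of an undirected graph. -/
noncomputable def mimw {V : Type} (G : SimpleGraph V) : ℕ :=
  sInf {n | ∃ bd : BranchDecomp V, bd.uwidth G = n}

/-- The linear mim-width of an undirected graph. -/
noncomputable def lmimw {V : Type} (G : SimpleGraph V) : ℕ :=
  sInf {n | ∃ bd : BranchDecomp V, IsCaterpillar bd.T ∧ bd.uwidth G = n}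


section Aux

theorem Set.mem_def {α : Type*} {a : α} {s : α → Prop} :
    @Membership.mem α (Set α) _ s a ↔ s a := Iff.rfl


lemma seg_mem_iff (a b : ℝ) (p : ℝ × ℝ) :
    p ∈ segment ℝ ((a,0):ℝ×ℝ) ((b,1):ℝ×ℝ) ↔
      ∃ θ : ℝ, 0 ≤ θ ∧ θ ≤ 1 ∧ p = ((1-θ)*a + θ*b, θ) := by
  rw [segment_eq_image]
  constructor
  · rintro ⟨θ, ⟨h0, h1⟩, rfl⟩
    exact ⟨θ, h0, h1, by simp [Prod.ext_iff]⟩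
  · rintro ⟨θ, h0, h1, rfl⟩
    exact ⟨θ, ⟨h0, h1⟩, by simp [Prod.ext_iff]⟩

lemma seg_inter_iff (a b a' c : ℝ) :
    (segment ℝ ((a,0):ℝ×ℝ) ((b,1):ℝ×ℝ) ∩ segment ℝ ((a',0):ℝ×ℝ) ((c,1):ℝ×ℝ)).Nonempty
    ↔ (a - a') * (b - c) ≤ 0 := by
  constructor
  · rintro ⟨p, hp1, hp2⟩
    rw [seg_mem_iff] at hp1 hp2
    obtain ⟨θ, h0, h1, rfl⟩ := hp1
    obtain ⟨τ, h0', h1', hp⟩ := hp2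
    have hθτ : θ = τ := (Prod.ext_iff.1 hp).2
    subst hθτ
    have heq : (1-θ)*a + θ*b = (1-θ)*a' + θ*c := (Prod.ext_iff.1 hp).1
    have e1 : (1-θ)*((a-a')*(a-a')) + θ*((b-c)*(a-a')) = 0 := by linear_combination (a-a') * heq
    have e2 : (1-θ)*((a-a')*(b-c)) + θ*((b-c)*(b-c)) = 0 := by linear_combination (b-c) * heq
    have p1 : 0 ≤ (1-θ)*((a-a')*(a-a')) := mul_nonneg (by linarith) (mul_self_nonneg _)
    have p2 : 0 ≤ θ*((b-c)*(b-c)) := mul_nonneg h0 (mul_self_nonneg _)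
    nlinarith [e1, e2, p1, p2]
  · intro h
    rcases eq_or_ne (a - a') 0 with ha | ha
    · refine ⟨(a, 0), ?_, ?_⟩ <;> rw [seg_mem_iff]
      · exact ⟨0, le_refl 0, zero_le_one, by norm_num⟩
      · exact ⟨0, le_refl 0, zero_le_one, by rw [show a' = a by linarith]; norm_num⟩
    · have hD : (a - a') - (b - c) ≠ 0 := by
        intro h0
        apply ha
        nlinarith [sq_nonneg (a - a')]
      set θ := (a - a') / ((a - a') - (b - c)) with hθdef
      have hsgn : ((a - a') < 0 ∧ 0 ≤ (b - c)) ∨ (0 < (a - a') ∧ (b - c) ≤ 0) := by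
        rcases lt_or_gt_of_ne ha with h' | h'
        · left; exact ⟨h', by nlinarith⟩
        · right; exact ⟨h', by nlinarith⟩
      have hθ0 : 0 ≤ θ := by
        rw [hθdef, div_nonneg_iff]
        rcases hsgn with ⟨h1, h2⟩ | ⟨h1, h2⟩
        · right; constructor <;> linarith
        · left; constructor <;> linarith
      have hθ1 : θ ≤ 1 := by
        rw [hθdef, div_le_one_iff]
        rcases hsgn with ⟨h1, h2⟩ | ⟨h1, h2⟩
        · right; right; constructor <;> linarith
        · left; constructor <;> linarith
      refine ⟨((1-θ)*a + θ*b, θ), ?_, ?_⟩ <;> rw [seg_mem_iff]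
      · exact ⟨θ, hθ0, hθ1, rfl⟩
      · refine ⟨θ, hθ0, hθ1, Prod.ext_iff.2 ⟨?_, rfl⟩⟩
        show (1-θ)*a + θ*b = (1-θ)*a' + θ*c
        rw [hθdef]
        field_simp
        ring


lemma no_three (a A b c : Fin 3 → ℝ)
    (hle : ∀ i j, a i ≤ A j)
    (hedge : ∀ i, (a i - A i) * (b i - c i) ≤ 0)
    (hnon : ∀ i j, i ≠ j → 0 < (a i - A j) * (b i - c j)) : False := by
  -- from hnon: for i ≠ j, a i < A j and b i < c j
  have key : ∀ i j, i ≠ j → a i < A j ∧ b i < c j := by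
    intro i j hij
    have h := hnon i j hij
    have h1 : a i ≤ A j := hle i j
    constructor
    · rcases eq_or_lt_of_le h1 with h2 | h2
      · exfalso; rw [h2] at h; simp at h
      · exact h2
    · nlinarith
  obtain ⟨i0, hi0⟩ := Finite.exists_min c
  -- the two other indices
  set i1 := i0 + 1
  set i2 := i0 + 2
  have hne : i1 ≠ i0 ∧ i2 ≠ i0 ∧ i1 ≠ i2 := by
    have : ∀ j : Fin 3, j+1 ≠ j ∧ j+2 ≠ j ∧ j+1 ≠ j+2 := by decide
    exact this i0
  -- for i ∈ {i1, i2}: a i = A i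
  have heq : ∀ i, i ≠ i0 → a i = A i := by
    intro i hi
    have hb : b i < c i := lt_of_lt_of_le (key i i0 hi).2 (hi0 i)
    have he := hedge i
    have h1 : a i ≤ A i := hle i i
    nlinarith
  have e1 := heq i1 hne.1
  have e2 := heq i2 hne.2.1
  have k12 := (key i1 i2 hne.2.2).1
  have k21 := (key i2 i1 (Ne.symm hne.2.2)).1
  linarith

lemma nu_le_of_card {V : Type} (D : V → V → Prop) (k : ℕ)
    (h : ∀ M : Finset (V × V), IsIndMatching D M → M.card ≤ k) : nu D ≤ k := by
  apply csSup_le'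
  rintro n ⟨M, hM, rfl⟩
  exact h M hM

lemma matching_card_le_two {V : Type} (E : V → V → Prop) (α β γ : V → ℝ)
    (hE : ∀ v w, E v w ↔ (α v - α w) * (β v - γ w) ≤ 0)
    (A : Set V) (hA : ∀ v ∈ A, ∀ w ∈ Aᶜ, α v ≤ α w)
    (M : Finset (V × V)) (hM : IsIndMatching (cutRel E A Aᶜ) M) : M.card ≤ 2 := by
  by_contra hcard
  push_neg at hcard
  rw [Finset.two_lt_card] at hcard
  obtain ⟨e, he, f, hf, g, hg, hef, heg, hfg⟩ := hcard
  set m : Fin 3 → V × V := ![e, f, g] with hm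
  have hmem : ∀ i, m i ∈ M := by
    intro i; fin_cases i <;> simpa [hm] using ‹_›
  have hdist : ∀ i j : Fin 3, i ≠ j → m i ≠ m j := by
    intro i j hij
    fin_cases i <;> fin_cases j <;> simp_all [hm] <;> tauto
  have hcut : ∀ i, (m i).1 ∈ A ∧ (m i).2 ∈ Aᶜ ∧ E (m i).1 (m i).2 :=
    fun i => hM.1 (m i) (hmem i)
  apply no_three (fun i => α (m i).1) (fun i => α (m i).2)
    (fun i => β (m i).1) (fun i => γ (m i).2)
  · intro i j
    exact hA (m i).1 (hcut i).1 (m j).2 (hcut j).2.1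
  · intro i
    exact (hE _ _).1 (hcut i).2.2
  · intro i j hij
    have h := (hM.2 (m i) (hmem i) (m j) (hmem j) (hdist i j hij)
      (m i).1 (Or.inl rfl) (m j).2 (Or.inr rfl)).2
    have hne : ¬ E (m i).1 (m j).2 := by
      intro hEij
      exact h ⟨(hcut i).1, (hcut j).2.1, hEij⟩
    rw [hE] at hne
    exact lt_of_not_ge hne

lemma nu_dir_le_two {V : Type} (E : V → V → Prop) (α β γ : V → ℝ)
    (hE : ∀ v w, E v w ↔ (α v - α w) * (β v - γ w) ≤ 0)
    (A : Set V) (hA : ∀ v ∈ A, ∀ w ∈ Aᶜ, α v ≤ α w) :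
    nu (cutRel E A Aᶜ) ≤ 2 :=
  nu_le_of_card _ _ (fun M hM => matching_card_le_two E α β γ hE A hA M hM)

lemma bimim_monotone_le_four {V : Type} (E : V → V → Prop) (α β γ : V → ℝ)
    (hE : ∀ v w, E v w ↔ (α v - α w) * (β v - γ w) ≤ 0)
    (A : Set V) (hA : ∀ v ∈ A, ∀ w ∈ Aᶜ, α v ≤ α w) :
    bimimCut E A ≤ 4 := by
  have h1 : nu (cutRel E A Aᶜ) ≤ 2 := nu_dir_le_two E α β γ hE A hA
  have h2 : nu (cutRel E Aᶜ A) ≤ 2 := by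
    have hE' : ∀ v w, E v w ↔ ((-α) v - (-α) w) * ((-β) v - (-γ) w) ≤ 0 := by
      intro v w
      rw [hE]
      simp only [Pi.neg_apply]
      constructor <;> intro h <;> nlinarith [h]
    have := nu_dir_le_two E (-α) (-β) (-γ) hE' Aᶜ (by
      intro v hv w hw
      simp only [Pi.neg_apply, neg_le_neg_iff]
      exact hA w (by simpa using hw) v hv)
    rwa [compl_compl] at this
  calc bimimCut E A = nu (cutRel E A Aᶜ) + nu (cutRel E Aᶜ A) := rfl
    _ ≤ 2 + 2 := Nat.add_le_add h1 h2
  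
lemma bimim_compl {V : Type} (E : V → V → Prop) (A : Set V) :
    bimimCut E Aᶜ = bimimCut E A := by
  unfold bimimCut
  rw [compl_compl, Nat.add_comm]

lemma nu_le_one_fst {V : Type} (D : V → V → Prop) (v : V)
    (h : ∀ x y, D x y → x = v) : nu D ≤ 1 := by
  apply nu_le_of_card
  intro M hM
  rw [Finset.card_le_one]
  intro e he f hf
  by_contra hef
  exact ((hM.2 e he f hf hef e.1 (Or.inl rfl) f.1 (Or.inl rfl)).1)
    ((h _ _ (hM.1 e he)).trans (h _ _ (hM.1 f hf)).symm)

lemma nu_le_one_snd {V : Type} (D : V → V → Prop) (v : V)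
    (h : ∀ x y, D x y → y = v) : nu D ≤ 1 := by
  apply nu_le_of_card
  intro M hM
  rw [Finset.card_le_one]
  intro e he f hf
  by_contra hef
  exact ((hM.2 e he f hf hef e.2 (Or.inr rfl) f.2 (Or.inr rfl)).1)
    ((h _ _ (hM.1 e he)).trans (h _ _ (hM.1 f hf)).symm)

lemma bimim_singleton {V : Type} (E : V → V → Prop) (v : V) :
    bimimCut E {v} ≤ 4 := by
  have h1 : nu (cutRel E {v} {v}ᶜ) ≤ 1 :=
    nu_le_one_fst _ v (fun x y h => h.1)
  have h2 : nu (cutRel E {v}ᶜ {v}) ≤ 1 :=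
    nu_le_one_snd _ v (fun x y h => h.2.1)
  calc bimimCut E {v} = nu (cutRel E {v} {v}ᶜ) + nu (cutRel E {v}ᶜ {v}) := rfl
    _ ≤ 1 + 1 := Nat.add_le_add h1 h2
    _ ≤ 4 := by norm_num


@[reducible] def catL (n : ℕ) : Type := Fin n ⊕ Fin (n-2)

def att (n i : ℕ) : ℕ := min (i - 1) (n - 3)

def catAdj (n : ℕ) : catL n → catL n → Prop
  | Sum.inl i, Sum.inl i' => n = 2 ∧ i ≠ i'
  | Sum.inl i, Sum.inr j => att n i.val = j.val
  | Sum.inr j, Sum.inl i => att n i.val = j.val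
  | Sum.inr j, Sum.inr k => j.val + 1 = k.val ∨ k.val + 1 = j.val

def catG (n : ℕ) : SimpleGraph (catL n) where
  Adj := catAdj n
  symm := ⟨by rintro (i|j) (i'|j') h <;> simp [catAdj] at * <;> tauto⟩
  loopless := ⟨by rintro (i|j) h <;> simp [catAdj] at h <;> omega⟩

@[simp] lemma catG_adj_ll {n} (i i' : Fin n) :
    (catG n).Adj (Sum.inl i) (Sum.inl i') ↔ n = 2 ∧ i ≠ i' := ⟨fun h => h, fun h => h⟩
@[simp] lemma catG_adj_lr {n} (i : Fin n) (j : Fin (n-2)) :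
    (catG n).Adj (Sum.inl i) (Sum.inr j) ↔ att n i.val = j.val := ⟨fun h => h, fun h => h⟩
@[simp] lemma catG_adj_rl {n} (i : Fin n) (j : Fin (n-2)) :
    (catG n).Adj (Sum.inr j) (Sum.inl i) ↔ att n i.val = j.val := ⟨fun h => h, fun h => h⟩
@[simp] lemma catG_adj_rr {n} (j k : Fin (n-2)) :
    (catG n).Adj (Sum.inr j) (Sum.inr k) ↔ j.val + 1 = k.val ∨ k.val + 1 = j.val := ⟨fun h => h, fun h => h⟩

lemma nbr_leaf_two (n : ℕ) (hn : n = 2) (i : Fin n) :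
    (catG n).neighborSet (Sum.inl i) = {Sum.inl ⟨1 - i.val, by omega⟩} := by
  ext x
  cases x with
  | inl i' =>
    simp [SimpleGraph.mem_neighborSet, Fin.ext_iff]
    omega
  | inr j => exact absurd j.isLt (by omega)

lemma nbr_leaf (n : ℕ) (hn : 3 ≤ n) (i : Fin n) :
    (catG n).neighborSet (Sum.inl i) = {Sum.inr ⟨att n i.val, by unfold att; omega⟩} := by
  ext x
  cases x with
  | inl i' =>
    simp [SimpleGraph.mem_neighborSet]
    intro h2
    exact absurd h2 (by omega)
  | inr j =>
    simp [SimpleGraph.mem_neighborSet, Fin.ext_iff]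
    omega

lemma deg_leaf (n : ℕ) (hn : 2 ≤ n) (i : Fin n) :
    ((catG n).neighborSet (Sum.inl i)).ncard = 1 := by
  rcases eq_or_lt_of_le hn with h2 | h3
  · rw [nbr_leaf_two n h2.symm, Set.ncard_singleton]
  · rw [nbr_leaf n h3, Set.ncard_singleton]

lemma deg_spine (n : ℕ) (hn : 3 ≤ n) (j : Fin (n-2)) :
    ((catG n).neighborSet (Sum.inr j)).ncard = 3 := by
  have hj := j.isLt
  rw [Set.ncard_eq_three]
  rcases eq_or_lt_of_le hn with h3 | h4
  · -- n = 3, single spine vertex, neighbors are the three leaves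
    refine ⟨Sum.inl ⟨0, by omega⟩, Sum.inl ⟨1, by omega⟩, Sum.inl ⟨2, by omega⟩,
      by simp [Fin.ext_iff], by simp [Fin.ext_iff], by simp [Fin.ext_iff], ?_⟩
    ext x
    cases x with
    | inl i => simp [SimpleGraph.mem_neighborSet, Fin.ext_iff, att]; omega
    | inr k =>
      have := k.isLt
      simp [SimpleGraph.mem_neighborSet, Fin.ext_iff]
      omega
  · rcases Nat.eq_zero_or_pos j.val with hj0 | hjpos
    · -- j = 0 < n - 3
      refine ⟨Sum.inl ⟨0, by omega⟩, Sum.inl ⟨1, by omega⟩, Sum.inr ⟨1, by omega⟩,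
        by simp [Fin.ext_iff], by simp, by simp, ?_⟩
      ext x
      cases x with
      | inl i => simp [SimpleGraph.mem_neighborSet, Fin.ext_iff, att]; omega
      | inr k => simp [SimpleGraph.mem_neighborSet, Fin.ext_iff]; omega
    · rcases eq_or_lt_of_le (show j.val ≤ n - 3 by omega) with hjtop | hjmid
      · -- j = n - 3
        refine ⟨Sum.inl ⟨n-2, by omega⟩, Sum.inl ⟨n-1, by omega⟩, Sum.inr ⟨n-4, by omega⟩,
          by simp [Fin.ext_iff]; omega, by simp, by simp, ?_⟩
        ext x
        cases x with
        | inl i =>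
          have := i.isLt
          simp [SimpleGraph.mem_neighborSet, Fin.ext_iff, att]; omega
        | inr k =>
          have := k.isLt
          simp [SimpleGraph.mem_neighborSet, Fin.ext_iff]; omega
      · -- 0 < j < n - 3
        refine ⟨Sum.inr ⟨j.val - 1, by omega⟩, Sum.inr ⟨j.val + 1, by omega⟩,
          Sum.inl ⟨j.val + 1, by omega⟩,
          by intro h; rw [Sum.inr.injEq, Fin.mk.injEq] at h; omega, by simp, by simp, ?_⟩
        ext x
        cases x with
        | inl i =>
          have := i.isLt
          simp [SimpleGraph.mem_neighborSet, Fin.ext_iff, att]; omega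
        | inr k => simp [SimpleGraph.mem_neighborSet, Fin.ext_iff]; omega

lemma reach_closed {W : Type} (H : SimpleGraph W) (C : Set W)
    (hC : ∀ x y, x ∈ C → H.Adj x y → y ∈ C) {u v : W} (h : H.Reachable u v) :
    u ∈ C → v ∈ C := by
  obtain ⟨p⟩ := h
  induction p with
  | nil => exact id
  | cons hadj p ih => exact fun hu => ih (hC _ _ hu hadj)

lemma closed_compl {W : Type} (H : SimpleGraph W) (C : Set W)
    (hC : ∀ x y, x ∈ C → H.Adj x y → y ∈ C) :
    ∀ x y, x ∈ Cᶜ → H.Adj x y → y ∈ Cᶜ :=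
  fun x y hx hadj hy => hx (hC y x hy hadj.symm)

lemma reach_chain {W : Type} (H : SimpleGraph W) (f : ℕ → W) (a b : ℕ) (hab : a ≤ b)
    (h : ∀ m, a ≤ m → m < b → H.Adj (f m) (f (m+1))) : H.Reachable (f a) (f b) := by
  induction b, hab using Nat.le_induction with
  | base => exact .rfl
  | succ b hab ih =>
      exact (ih (fun m h1 h2 => h m h1 (by omega))).trans (h b hab (by omega)).reachable

def spineF (n : ℕ) (hn : 3 ≤ n) (m : ℕ) : catL n := Sum.inr ⟨min m (n-3), by omega⟩

lemma spine_reach (n : ℕ) (hn : 3 ≤ n) (H : SimpleGraph (catL n)) (a b : ℕ)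
    (hab : a ≤ b) (hb : b ≤ n - 3)
    (h : ∀ m (h1 : a ≤ m) (h2 : m < b), H.Adj (Sum.inr ⟨m, by omega⟩) (Sum.inr ⟨m+1, by omega⟩)) :
    H.Reachable (Sum.inr ⟨a, by omega⟩) (Sum.inr ⟨b, by omega⟩) := by
  have key : ∀ m, m ≤ n - 3 → ∀ (hm : m < n - 2), spineF n hn m = Sum.inr ⟨m, hm⟩ := by
    intro m hm hm'
    simp only [spineF, Sum.inr.injEq, Fin.mk.injEq]
    omega
  rw [← key a (by omega) (by omega), ← key b hb (by omega)]
  apply reach_chain H (spineF n hn) a b hab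
  intro m h1 h2
  rw [key m (by omega) (by omega), key (m+1) (by omega) (by omega)]
  exact h m h1 h2

def Lset (n t : ℕ) : Set (catL n) :=
  Sum.elim (fun i => att n i.val ≤ t) (fun k => k.val ≤ t)

lemma Lset_closed (n : ℕ) (j : Fin (n-2)) (hj : j.val + 1 < n - 2) :
    ∀ x y, x ∈ Lset n j.val →
      ((catG n).deleteEdges {s(Sum.inr j, Sum.inr ⟨j.val+1, hj⟩)}).Adj x y →
      y ∈ Lset n j.val := by
  intro x y hx hadj
  rw [SimpleGraph.deleteEdges_adj, Set.mem_singleton_iff] at hadj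
  obtain ⟨ha, hs⟩ := hadj
  have hn : 3 ≤ n := by omega
  cases x with
  | inl i =>
    cases y with
    | inl i' => rw [catG_adj_ll] at ha; omega
    | inr k =>
      rw [catG_adj_lr] at ha
      simp only [Lset, Set.mem_def, Sum.elim_inl, Sum.elim_inr] at hx ⊢
      omega
  | inr k =>
    cases y with
    | inl i =>
      rw [catG_adj_rl] at ha
      simp only [Lset, Set.mem_def, Sum.elim_inl, Sum.elim_inr] at hx ⊢
      omega
    | inr k' =>
      rw [catG_adj_rr] at ha
      rw [Sym2.eq_iff] at hs
      simp only [Sum.inr.injEq, Fin.ext_iff] at hs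
      simp only [Lset, Set.mem_def, Sum.elim_inr] at hx ⊢
      omega

lemma leafC_closed_two (n : ℕ) (hn : n = 2) (i i' : Fin n) (hne : i ≠ i') :
    ∀ x y, x ∈ ({Sum.inl i} : Set (catL n)) →
      ((catG n).deleteEdges {s(Sum.inl i, Sum.inl i')}).Adj x y →
      y ∈ ({Sum.inl i} : Set (catL n)) := by
  intro x y hx hadj
  rw [Set.mem_singleton_iff] at hx
  subst hx
  rw [SimpleGraph.deleteEdges_adj, Set.mem_singleton_iff] at hadj
  obtain ⟨ha, hs⟩ := hadj
  cases y with
  | inl i'' =>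
    rw [catG_adj_ll] at ha
    exfalso
    apply hs
    rw [Sym2.eq_iff]
    left
    refine ⟨rfl, ?_⟩
    have h1 := i.isLt
    have h2 := i'.isLt
    have h3 := i''.isLt
    have := ha.2
    simp only [Sum.inl.injEq, Fin.ext_iff] at *
    omega
  | inr k => exact absurd k.isLt (by omega)

lemma leafC_closed (n : ℕ) (hn : 3 ≤ n) (i : Fin n) (j : Fin (n-2))
    (hij : att n i.val = j.val) :
    ∀ x y, x ∈ ({Sum.inl i} : Set (catL n)) →
      ((catG n).deleteEdges {s(Sum.inl i, Sum.inr j)}).Adj x y →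
      y ∈ ({Sum.inl i} : Set (catL n)) := by
  intro x y hx hadj
  rw [Set.mem_singleton_iff] at hx
  subst hx
  rw [SimpleGraph.deleteEdges_adj, Set.mem_singleton_iff] at hadj
  obtain ⟨ha, hs⟩ := hadj
  cases y with
  | inl i'' => rw [catG_adj_ll] at ha; omega
  | inr k =>
    rw [catG_adj_lr] at ha
    exfalso
    apply hs
    rw [Sym2.eq_iff]
    left
    exact ⟨rfl, by rw [Sum.inr.injEq]; exact Fin.ext (by omega)⟩

lemma reach_low (n : ℕ) (hn : 3 ≤ n) (j : Fin (n-2)) (hj : j.val + 1 < n - 2)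
    (i : Fin n) (hi : att n i.val ≤ j.val) :
    ((catG n).deleteEdges {s(Sum.inr j, Sum.inr ⟨j.val+1, hj⟩)}).Reachable
      (Sum.inr j) (Sum.inl i) := by
  have hatt : att n i.val ≤ n - 3 := by unfold att; omega
  have hjle : j.val ≤ n - 3 := by omega
  have step1 : ((catG n).deleteEdges {s(Sum.inr j, Sum.inr ⟨j.val+1, hj⟩)}).Reachable
      (Sum.inr ⟨att n i.val, by omega⟩) (Sum.inr ⟨j.val, by omega⟩) := by
    apply spine_reach n hn _ _ _ hi hjle
    intro m h1 h2
    rw [SimpleGraph.deleteEdges_adj]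
    constructor
    · rw [catG_adj_rr]; left; rfl
    · rw [Set.mem_singleton_iff, Sym2.eq_iff]
      simp only [Sum.inr.injEq, Fin.ext_iff]
      omega
  have step2 : ((catG n).deleteEdges {s(Sum.inr j, Sum.inr ⟨j.val+1, hj⟩)}).Adj
      (Sum.inr ⟨att n i.val, by omega⟩) (Sum.inl i) := by
    rw [SimpleGraph.deleteEdges_adj]
    constructor
    · rw [catG_adj_rl]
    · rw [Set.mem_singleton_iff, Sym2.eq_iff]
      rintro (⟨h1, h2⟩ | ⟨h1, h2⟩) <;> simp_all
  have hjeq : (Sum.inr ⟨j.val, by omega⟩ : catL n) = Sum.inr j := by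
    rw [Sum.inr.injEq]
  rw [hjeq] at step1
  exact (step1.symm).trans step2.reachable

lemma reach_high (n : ℕ) (hn : 3 ≤ n) (j : Fin (n-2)) (hj : j.val + 1 < n - 2)
    (i : Fin n) (hi : j.val < att n i.val) :
    ((catG n).deleteEdges {s(Sum.inr j, Sum.inr ⟨j.val+1, hj⟩)}).Reachable
      (Sum.inr ⟨j.val+1, hj⟩) (Sum.inl i) := by
  have hatt : att n i.val ≤ n - 3 := by unfold att; omega
  have step1 : ((catG n).deleteEdges {s(Sum.inr j, Sum.inr ⟨j.val+1, hj⟩)}).Reachable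
      (Sum.inr ⟨j.val+1, hj⟩) (Sum.inr ⟨att n i.val, by omega⟩) := by
    apply spine_reach n hn _ _ _ (by omega : j.val + 1 ≤ att n i.val) hatt
    intro m h1 h2
    rw [SimpleGraph.deleteEdges_adj]
    constructor
    · rw [catG_adj_rr]; left; rfl
    · rw [Set.mem_singleton_iff, Sym2.eq_iff]
      simp only [Sum.inr.injEq, Fin.ext_iff]
      omega
  have step2 : ((catG n).deleteEdges {s(Sum.inr j, Sum.inr ⟨j.val+1, hj⟩)}).Adj
      (Sum.inr ⟨att n i.val, by omega⟩) (Sum.inl i) := by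
    rw [SimpleGraph.deleteEdges_adj]
    constructor
    · rw [catG_adj_rl]
    · rw [Set.mem_singleton_iff, Sym2.eq_iff]
      rintro (⟨h1, h2⟩ | ⟨h1, h2⟩) <;> simp_all
  exact step1.trans step2.reachable

lemma reach_off_leaf (n : ℕ) (hn : 3 ≤ n) (i i' : Fin n) (hne : i' ≠ i)
    (j0 j : Fin (n-2)) :
    ((catG n).deleteEdges {s(Sum.inl i, Sum.inr j0)}).Reachable
      (Sum.inr j) (Sum.inl i') := by
  have hatt : att n i'.val ≤ n - 3 := by unfold att; omega
  have hspine : ∀ (a b : ℕ) (ha : a ≤ b) (hb : b ≤ n - 3),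
      ((catG n).deleteEdges {s(Sum.inl i, Sum.inr j0)}).Reachable
        (Sum.inr ⟨a, by omega⟩) (Sum.inr ⟨b, by omega⟩) := by
    intro a b ha hb
    apply spine_reach n hn _ _ _ ha hb
    intro m h1 h2
    rw [SimpleGraph.deleteEdges_adj]
    constructor
    · rw [catG_adj_rr]; left; rfl
    · rw [Set.mem_singleton_iff, Sym2.eq_iff]
      rintro (⟨h1, h2⟩ | ⟨h1, h2⟩) <;> simp_all
  have step2 : ((catG n).deleteEdges {s(Sum.inl i, Sum.inr j0)}).Adj
      (Sum.inr ⟨att n i'.val, by omega⟩) (Sum.inl i') := by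
    rw [SimpleGraph.deleteEdges_adj]
    constructor
    · rw [catG_adj_rl]
    · rw [Set.mem_singleton_iff, Sym2.eq_iff]
      simp only [Sum.inr.injEq, Sum.inl.injEq, reduceCtorEq, false_and, and_false, false_or]
      rintro ⟨h1, h2⟩
      exact hne h2
  have hj : (Sum.inr j : catL n) = Sum.inr ⟨j.val, j.isLt⟩ := by
    rw [Sum.inr.injEq]
  rcases le_total j.val (att n i'.val) with hle | hle
  · have := hspine j.val (att n i'.val) hle hatt
    rw [hj]
    have hconv : (Sum.inr ⟨j.val, by omega⟩ : catL n) = Sum.inr ⟨j.val, j.isLt⟩ := by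
      rw [Sum.inr.injEq]
    rw [hconv] at this
    exact this.trans step2.reachable
  · have := hspine (att n i'.val) j.val hle (by omega)
    rw [hj]
    have hconv : (Sum.inr ⟨j.val, by omega⟩ : catL n) = Sum.inr ⟨j.val, j.isLt⟩ := by
      rw [Sum.inr.injEq]
    rw [hconv] at this
    exact this.symm.trans step2.reachable

lemma catG_conn (n : ℕ) (hn : 2 ≤ n) : (catG n).Connected := by
  have hne : Nonempty (catL n) := ⟨Sum.inl ⟨0, by omega⟩⟩
  haveI := hne
  rcases eq_or_lt_of_le hn with h2 | h3
  · refine SimpleGraph.Connected.mk fun u v => ?_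
    cases u with
    | inl i =>
      cases v with
      | inl i' =>
        rcases eq_or_ne i i' with rfl | hii
        · exact .rfl
        · exact ((catG_adj_ll i i').2 ⟨h2.symm, hii⟩).reachable
      | inr j => exact absurd j.isLt (by omega)
    | inr j => exact absurd j.isLt (by omega)
  · have to0 : ∀ x : catL n, (catG n).Reachable x (Sum.inr ⟨0, by omega⟩) := by
      have hsp : ∀ (b : ℕ) (hb : b ≤ n - 3),
          (catG n).Reachable (Sum.inr ⟨0, by omega⟩) (Sum.inr ⟨b, by omega⟩) := by
        intro b hb
        apply spine_reach n (by omega) _ _ _ (Nat.zero_le b) hb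
        intro m h1 h2
        rw [catG_adj_rr]
        left; rfl
      intro x
      cases x with
      | inl i =>
        have hatt : att n i.val ≤ n - 3 := by unfold att; omega
        have step : (catG n).Adj (Sum.inl i) (Sum.inr ⟨att n i.val, by omega⟩) := by
          rw [catG_adj_lr]
        exact step.reachable.trans (hsp (att n i.val) hatt).symm
      | inr j =>
        have hj : j.val ≤ n - 3 := by omega
        have := (hsp j.val hj).symm
        have hconv : (Sum.inr ⟨j.val, by omega⟩ : catL n) = Sum.inr j := by
          rw [Sum.inr.injEq]
        rwa [hconv] at this
    exact SimpleGraph.Connected.mk fun u v => (to0 u).trans (to0 v).symm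

lemma catG_acyclic (n : ℕ) (hn : 2 ≤ n) : (catG n).IsAcyclic := by
  rw [SimpleGraph.isAcyclic_iff_forall_adj_isBridge]
  intro v w hadj
  rw [SimpleGraph.isBridge_iff]
  intro hreach
  have hreach' : ((catG n).deleteEdges {s(v, w)}).Reachable v w := hreach
  clear hreach
  cases v with
  | inl i =>
    cases w with
    | inl i' =>
      rw [catG_adj_ll] at hadj
      have := reach_closed _ _ (leafC_closed_two n hadj.1 i i' hadj.2) hreach' rfl
      rw [Set.mem_singleton_iff, Sum.inl.injEq] at this
      exact hadj.2 this.symm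
    | inr j =>
      rw [catG_adj_lr] at hadj
      have hn3 : 3 ≤ n := by have := j.isLt; omega
      have := reach_closed _ _ (leafC_closed n hn3 i j hadj) hreach' rfl
      simp at this
  | inr j =>
    cases w with
    | inl i =>
      rw [catG_adj_rl] at hadj
      have hn3 : 3 ≤ n := by have := j.isLt; omega
      have hswap : ({s(Sum.inr j, Sum.inl i)} : Set (Sym2 (catL n)))
          = {s(Sum.inl i, Sum.inr j)} := by rw [Sym2.eq_swap]
      rw [hswap] at hreach'
      have := reach_closed _ _ (leafC_closed n hn3 i j hadj) hreach'.symm rfl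
      simp at this
    | inr k =>
      rw [catG_adj_rr] at hadj
      have hn3 : 3 ≤ n := by have := j.isLt; omega
      rcases hadj with h1 | h1
      · have hj1 : j.val + 1 < n - 2 := by have := k.isLt; omega
        have hk : k = ⟨j.val + 1, hj1⟩ := Fin.ext h1.symm
        rw [hk] at hreach'
        have := reach_closed _ _ (Lset_closed n j hj1) hreach'
          (by simp [Lset, Set.mem_def])
        simp only [Lset, Set.mem_def, Sum.elim_inr] at this
        omega
      · have hj1 : k.val + 1 < n - 2 := by have := j.isLt; omega
        have hjeq : j = ⟨k.val + 1, hj1⟩ := Fin.ext h1.symm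
        rw [hjeq] at hreach'
        have hswap : ({s(Sum.inr ⟨k.val+1, hj1⟩, Sum.inr k)} : Set (Sym2 (catL n)))
            = {s(Sum.inr k, Sum.inr ⟨k.val+1, hj1⟩)} := by rw [Sym2.eq_swap]
        rw [hswap] at hreach'
        have := reach_closed _ _ (Lset_closed n k hj1) hreach'.symm
          (by simp [Lset, Set.mem_def])
        simp only [Lset, Set.mem_def, Sum.elim_inr] at this
        omega

lemma catG_isTree (n : ℕ) (hn : 2 ≤ n) : (catG n).IsTree :=
  ⟨catG_conn n hn, catG_acyclic n hn⟩

def spineWalk (n : ℕ) : (t : ℕ) → (ht : t < n - 2) →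
    (catG n).Walk (Sum.inr ⟨t, ht⟩) (Sum.inr ⟨0, by omega⟩)
  | 0, ht => SimpleGraph.Walk.nil
  | (t+1), ht =>
      SimpleGraph.Walk.cons
        (by rw [catG_adj_rr]; right; rfl :
          (catG n).Adj (Sum.inr ⟨t+1, ht⟩) (Sum.inr ⟨t, by omega⟩))
        (spineWalk n t (by omega))

lemma spineWalk_support (n : ℕ) : ∀ (t : ℕ) (ht : t < n - 2) (x : catL n),
    x ∈ (spineWalk n t ht).support ↔ ∃ m, m ≤ t ∧ ∃ hm : m < n - 2, x = Sum.inr ⟨m, hm⟩ := by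
  intro t
  induction t with
  | zero =>
    intro ht x
    simp only [spineWalk, SimpleGraph.Walk.support_nil, List.mem_singleton]
    constructor
    · rintro rfl; exact ⟨0, le_refl 0, ht, rfl⟩
    · rintro ⟨m, hm0, hm, rfl⟩
      have : m = 0 := by omega
      subst this; rfl
  | succ t ih =>
    intro ht x
    simp only [spineWalk, SimpleGraph.Walk.support_cons, List.mem_cons]
    rw [ih (by omega) x]
    constructor
    · rintro (rfl | ⟨m, hm0, hm, rfl⟩)
      · exact ⟨t+1, le_refl _, ht, rfl⟩
      · exact ⟨m, by omega, hm, rfl⟩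
    · rintro ⟨m, hm0, hm, rfl⟩
      rcases eq_or_lt_of_le hm0 with rfl | hlt
      · left; rfl
      · right; exact ⟨m, by omega, hm, rfl⟩

lemma spineWalk_isPath (n : ℕ) : ∀ (t : ℕ) (ht : t < n - 2), (spineWalk n t ht).IsPath := by
  intro t
  induction t with
  | zero => intro ht; exact SimpleGraph.Walk.IsPath.nil
  | succ t ih =>
    intro ht
    apply SimpleGraph.Walk.IsPath.cons (ih (by omega))
    rw [spineWalk_support]
    rintro ⟨m, hm0, hm, heq⟩
    rw [Sum.inr.injEq, Fin.mk.injEq] at heq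
    omega

lemma catG_caterpillar (n : ℕ) (hn : 2 ≤ n) :
    ∃ (u v : catL n) (p : (catG n).Walk u v), p.IsPath ∧
      ∀ w : catL n, w ∉ p.support → ∃ x ∈ p.support, (catG n).Adj w x := by
  rcases eq_or_lt_of_le hn with h2 | h3
  · refine ⟨Sum.inl ⟨0, by omega⟩, Sum.inl ⟨1, by omega⟩,
      SimpleGraph.Walk.cons ((catG_adj_ll _ _).2 ⟨h2.symm, by
        intro h; rw [Fin.mk.injEq] at h; omega⟩) SimpleGraph.Walk.nil, ?_, ?_⟩
    · rw [SimpleGraph.Walk.isPath_def]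
      simp only [SimpleGraph.Walk.support_cons, SimpleGraph.Walk.support_nil]
      simp [Fin.ext_iff]
    · intro w hw
      exfalso
      apply hw
      simp only [SimpleGraph.Walk.support_cons, SimpleGraph.Walk.support_nil,
        List.mem_cons, List.mem_singleton]
      cases w with
      | inl i =>
        have := i.isLt
        rcases (by omega : i.val = 0 ∨ i.val = 1) with h | h
        · left; exact congrArg Sum.inl (Fin.ext h)
        · right; left; exact congrArg Sum.inl (Fin.ext h)
      | inr j => exact absurd j.isLt (by omega)
  · refine ⟨Sum.inr ⟨n-3, by omega⟩, Sum.inr ⟨0, by omega⟩,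
      spineWalk n (n-3) (by omega), spineWalk_isPath n (n-3) (by omega), ?_⟩
    intro w hw
    cases w with
    | inl i =>
      refine ⟨Sum.inr ⟨att n i.val, by unfold att; omega⟩, ?_, ?_⟩
      · rw [spineWalk_support]
        exact ⟨att n i.val, by unfold att; omega, by unfold att; omega, rfl⟩
      · rw [catG_adj_lr]
    | inr j =>
      exfalso
      apply hw
      rw [spineWalk_support]
      exact ⟨j.val, by omega, j.isLt, by rw [Sum.inr.injEq]⟩

end Aux


def catBD (V : Type) [Fintype V] (hn : 2 ≤ Fintype.card V)
    (eV : Fin (Fintype.card V) ≃ V) : BranchDecomp V where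
  L := catL (Fintype.card V)
  finL := inferInstance
  T := catG (Fintype.card V)
  isTree := catG_isTree _ hn
  two_le := by
    have h1 : Nat.card (catL (Fintype.card V)) =
        Fintype.card V + (Fintype.card V - 2) := by
      simp [Nat.card_sum]
    omega
  subcubic := by
    rintro (i | j)
    · exact Or.inl (deg_leaf _ hn i)
    · exact Or.inr (deg_spine _ (by have := j.isLt; omega) j)
  toLeaf := fun v => Sum.inl (eV.symm v)
  inj := fun v w h => eV.symm.injective (by injection h)
  mem_leaf := fun v => deg_leaf _ hn _
  surj := by
    rintro (i | j) h1
    · exact ⟨eV i, by simp⟩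
    · rw [deg_spine _ (by have := j.isLt; omega) j] at h1
      omega

lemma catBD_T (V : Type) [Fintype V] (hn : 2 ≤ Fintype.card V)
    (eV : Fin (Fintype.card V) ≃ V) : (catBD V hn eV).T = catG (Fintype.card V) := rfl

lemma catBD_side (V : Type) [Fintype V] (hn : 2 ≤ Fintype.card V)
    (eV : Fin (Fintype.card V) ≃ V) (t₁ t₂ : catL (Fintype.card V)) :
    (catBD V hn eV).side t₁ t₂ =
      {v | ((catG (Fintype.card V)).deleteEdges {s(t₁, t₂)}).Reachable t₁
        (Sum.inl (eV.symm v))} := rfl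

theorem stmt_11 {V : Type} [Fintype V] (h2 : 2 ≤ Nat.card V)
    (E : V → V → Prop) (α β γ : V → ℝ)
    (hrep : ∀ v w, E v w ↔
      (segment ℝ ((α v, 0) : ℝ × ℝ) ((β v, 1) : ℝ × ℝ) ∩
        segment ℝ ((α w, 0) : ℝ × ℝ) ((γ w, 1) : ℝ × ℝ)).Nonempty) :
    lbimimw E ≤ 4 := by
  classical
  have hE : ∀ v w, E v w ↔ (α v - α w) * (β v - γ w) ≤ 0 := by
    intro v w; rw [hrep, seg_inter_iff]
  have hn : 2 ≤ Fintype.card V := by rwa [Nat.card_eq_fintype_card] at h2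
  set n := Fintype.card V with hndef
  let e0 : V ≃ Fin n := Fintype.equivFin V
  let σ : Equiv.Perm (Fin n) := Tuple.sort (α ∘ e0.symm)
  let eV : Fin n ≃ V := σ.trans e0.symm
  have hmono : Monotone ((α ∘ e0.symm) ∘ σ) := Tuple.monotone_sort (α ∘ e0.symm)
  have hmono' : ∀ i j : Fin n, i ≤ j → α (eV i) ≤ α (eV j) := fun i j hij => hmono hij
  -- bound for prefix cuts
  have cutA : ∀ (j : ℕ), j + 1 < n - 2 →
      bimimCut E {v : V | att n (eV.symm v).val ≤ j} ≤ 4 := by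
    intro j hj
    apply bimim_monotone_le_four E α β γ hE
    intro v hv w hw
    have hv' : att n (eV.symm v).val ≤ j := hv
    have hw' : ¬ att n (eV.symm w).val ≤ j := hw
    have h1 := (eV.symm v).isLt
    have h2 := (eV.symm w).isLt
    have hle : eV.symm v ≤ eV.symm w := by
      rw [Fin.le_def]; unfold att at hv' hw'; omega
    have := hmono' _ _ hle
    simpa using this
  have hwidth : (catBD V hn eV).width E ≤ 4 := by
    apply csSup_le'
    rintro k ⟨t₁, t₂, hadj, rfl⟩
    rw [catBD_T] at hadj
    cases t₁ with
    | inl i =>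
      cases t₂ with
      | inl i' =>
        rw [catG_adj_ll] at hadj
        have hside : (catBD V hn eV).side (Sum.inl i) (Sum.inl i') = {eV i} := by
          rw [catBD_side]
          ext v
          simp only [Set.mem_setOf_eq, Set.mem_singleton_iff]
          constructor
          · intro hr
            have := reach_closed _ _ (leafC_closed_two n hadj.1 i i' hadj.2) hr rfl
            rw [Set.mem_singleton_iff, Sum.inl.injEq] at this
            rw [← this, Equiv.apply_symm_apply]
          · rintro rfl
            rw [Equiv.symm_apply_apply]
        rw [hside]
        exact bimim_singleton E (eV i)
      | inr j =>
        rw [catG_adj_lr] at hadj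
        have hn3 : 3 ≤ n := by have := j.isLt; omega
        have hside : (catBD V hn eV).side (Sum.inl i) (Sum.inr j) = {eV i} := by
          rw [catBD_side]
          ext v
          simp only [Set.mem_setOf_eq, Set.mem_singleton_iff]
          constructor
          · intro hr
            have := reach_closed _ _ (leafC_closed n hn3 i j hadj) hr rfl
            rw [Set.mem_singleton_iff, Sum.inl.injEq] at this
            rw [← this, Equiv.apply_symm_apply]
          · rintro rfl
            rw [Equiv.symm_apply_apply]
        rw [hside]
        exact bimim_singleton E (eV i)
    | inr j =>
      cases t₂ with
      | inl i =>
        rw [catG_adj_rl] at hadj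
        have hn3 : 3 ≤ n := by have := j.isLt; omega
        have hsw : ({s(Sum.inr j, Sum.inl i)} : Set (Sym2 (catL n)))
            = {s(Sum.inl i, Sum.inr j)} := by rw [Sym2.eq_swap]
        have hside : (catBD V hn eV).side (Sum.inr j) (Sum.inl i) = {eV i}ᶜ := by
          rw [catBD_side]
          ext v
          simp only [Set.mem_setOf_eq, Set.mem_compl_iff, Set.mem_singleton_iff]
          constructor
          · intro hr
            intro hv
            subst hv
            rw [Equiv.symm_apply_apply, hsw] at hr
            have := reach_closed _ _ (leafC_closed n hn3 i j hadj) hr.symm rfl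
            simp at this
          · intro hv
            have hne : eV.symm v ≠ i := fun h => hv (by rw [← h, Equiv.apply_symm_apply])
            rw [hsw]
            exact reach_off_leaf n hn3 i (eV.symm v) hne j j
        rw [hside, bimim_compl]
        exact bimim_singleton E (eV i)
      | inr k =>
        rw [catG_adj_rr] at hadj
        have hn3 : 3 ≤ n := by have := j.isLt; omega
        rcases hadj with h1 | h1
        · have hj1 : j.val + 1 < n - 2 := by have := k.isLt; omega
          have hk : k = ⟨j.val + 1, hj1⟩ := Fin.ext h1.symm
          rw [hk]
          have hside : (catBD V hn eV).side (Sum.inr j) (Sum.inr ⟨j.val+1, hj1⟩)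
              = {v : V | att n (eV.symm v).val ≤ j.val} := by
            rw [catBD_side]
            ext v
            simp only [Set.mem_setOf_eq]
            constructor
            · intro hr
              have := reach_closed _ _ (Lset_closed n j hj1) hr
                (by simp [Lset, Set.mem_def])
              simpa only [Lset, Set.mem_def, Sum.elim_inl] using this
            · intro hv
              exact reach_low n hn3 j hj1 (eV.symm v) hv
          rw [hside]
          exact cutA j.val hj1
        · have hj1 : k.val + 1 < n - 2 := by have := j.isLt; omega
          have hjeq : j = ⟨k.val + 1, hj1⟩ := Fin.ext h1.symm
          rw [hjeq]
          have hsw : ({s(Sum.inr ⟨k.val+1, hj1⟩, Sum.inr k)} : Set (Sym2 (catL n)))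
              = {s(Sum.inr k, Sum.inr ⟨k.val+1, hj1⟩)} := by rw [Sym2.eq_swap]
          have hside : (catBD V hn eV).side (Sum.inr ⟨k.val+1, hj1⟩) (Sum.inr k)
              = {v : V | att n (eV.symm v).val ≤ k.val}ᶜ := by
            rw [catBD_side]
            ext v
            simp only [Set.mem_setOf_eq, Set.mem_compl_iff]
            constructor
            · intro hr hv
              rw [hsw] at hr
              have := reach_closed _ _ (closed_compl _ _ (Lset_closed n k hj1)) hr
                (by intro hmem; simp only [Lset, Set.mem_def, Sum.elim_inr] at hmem; omega)
              exact this (by simpa only [Lset, Set.mem_def, Sum.elim_inl] using hv)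
            · intro hv
              rw [hsw]
              exact reach_high n hn3 k hj1 (eV.symm v) (by omega)
          rw [hside, bimim_compl]
          exact cutA k.val hj1
  have hcat : IsCaterpillar (catBD V hn eV).T := by
    rw [catBD_T]
    exact catG_caterpillar n hn
  exact le_trans (Nat.sInf_le ⟨catBD V hn eV, hcat, rfl⟩) hwidth
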